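/- arXiv:1006.0329 — 2 statements merged into one kernel-verified Lean document; each statement's English description precedes it below -/
import Mathlib

section
/- Let N = 2M+1, M ≥ 1, and K₂ = T_R T_θ with R_0 = R, so T_R = diag(1,-1,-1,-1/2,-1/2,...,-1/M,-1/M). Then K₂K₂^T = (N/2)·diag(2,1,1,1/4,1/4,...,1/M²,1/M²), hence the 2-norm condition number of K₂ equals √2·M, independently of R. -/
open Matrix
open scoped Matrix.Norms.L2Operator

noncomputable section

/-- Equispaced collocation angles `θ_j = 2π(j-1)/N` (0-based: `θ_j = 2πj/N`). -/
def theta (N : ℕ) (j : Fin N) : ℝ := 2 * Real.pi * j / N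

/-- The trigonometric collocation matrix `T_θ ∈ ℝ^{(2M+1)×(2M+1)}`:
row `1` (index 0) is all ones, row `2k` is `cos(kθ_j)`, row `2k+1` is `sin(kθ_j)`.
In 0-based indexing, the frequency of row `i ≥ 1` is `k = (i+1)/2`. -/
def Ttheta (M : ℕ) : Matrix (Fin (2*M+1)) (Fin (2*M+1)) ℝ := fun i j =>
  if i.val = 0 then 1
  else if i.val % 2 = 1 then Real.cos ((((i.val+1)/2 : ℕ) : ℝ) * theta (2*M+1) j)
  else Real.sin ((((i.val+1)/2 : ℕ) : ℝ) * theta (2*M+1) j)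

/-- The diagonal matrix `T_R = diag(1, -(R/R₀), -(R/R₀), …, -(1/M)(R/R₀)^M, -(1/M)(R/R₀)^M)`:
the diagonal entry at (0-based) index `i ≥ 1` is `-(1/k)(R/R₀)^k` with `k = (i+1)/2`. -/
def TR (M : ℕ) (R R₀ : ℝ) : Matrix (Fin (2*M+1)) (Fin (2*M+1)) ℝ :=
  Matrix.diagonal (fun i : Fin (2*M+1) =>
    if i.val = 0 then 1
    else -(1 / (((i.val+1)/2 : ℕ) : ℝ)) * (R / R₀) ^ ((i.val+1)/2 : ℕ))


open Finset in
lemma sum_exp_int (N : ℕ) (hN : 0 < N) (k : ℤ) (hk : ¬ (N:ℤ) ∣ k) :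
    ∑ j : Fin N, Complex.exp (2 * Real.pi * Complex.I * k * j / N) = 0 := by
  have hNne : (N : ℂ) ≠ 0 := Nat.cast_ne_zero.mpr hN.ne'
  have h2 : (2 * (Real.pi:ℂ) * Complex.I) ≠ 0 := by
    have hπ : (Real.pi : ℂ) ≠ 0 := by exact_mod_cast Real.pi_ne_zero
    simp [Complex.I_ne_zero, hπ]
  set z : ℂ := Complex.exp (2 * Real.pi * Complex.I * k / N) with hz
  have hzj : ∀ j : Fin N, Complex.exp (2 * Real.pi * Complex.I * k * j / N) = z ^ (j : ℕ) := by
    intro j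
    rw [hz, ← Complex.exp_nat_mul]
    ring_nf
  have hzN : z ^ N = 1 := by
    rw [hz, ← Complex.exp_nat_mul]
    have : (N : ℂ) * (2 * Real.pi * Complex.I * k / N) = k * (2 * Real.pi * Complex.I) := by
      field_simp
    rw [this]
    simpa [mul_comm] using Complex.exp_int_mul_two_pi_mul_I k
  have hz1 : z ≠ 1 := by
    intro h
    rw [hz, Complex.exp_eq_one_iff] at h
    obtain ⟨n, hn⟩ := h
    apply hk
    refine ⟨n, ?_⟩
    have h3 := congrArg (· * (N:ℂ)) hn
    simp only [div_mul_cancel₀ _ hNne] at h3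
    have h4 : (2 * (Real.pi:ℂ) * Complex.I) * k = (2 * (Real.pi:ℂ) * Complex.I) * (N * n) := by
      linear_combination h3
    have h5 : (k : ℂ) = (N:ℂ) * n := mul_left_cancel₀ h2 h4
    exact_mod_cast h5
  calc ∑ j : Fin N, Complex.exp (2 * Real.pi * Complex.I * k * j / N)
      = ∑ j : Fin N, z ^ (j:ℕ) := Finset.sum_congr rfl fun j _ => hzj j
    _ = ∑ j ∈ range N, z ^ j := Fin.sum_univ_eq_sum_range _ N
    _ = (z ^ N - 1) / (z - 1) := geom_sum_eq hz1 N
    _ = 0 := by rw [hzN]; simp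

lemma sum_cos_int (N : ℕ) (hN : 0 < N) (k : ℤ) :
    ∑ j : Fin N, Real.cos (2 * Real.pi * k * j / N) = if (N:ℤ) ∣ k then (N:ℝ) else 0 := by
  by_cases hk : (N:ℤ) ∣ k
  · obtain ⟨m, rfl⟩ := hk
    rw [if_pos ⟨m, rfl⟩]
    have : ∀ j : Fin N, Real.cos (2 * Real.pi * (↑(↑N * m):ℝ) * j / N) = 1 := by
      intro j
      have : 2 * Real.pi * (↑(↑N * m):ℝ) * j / N = ((m * j : ℤ) : ℝ) * (2 * Real.pi) := by
        push_cast
        field_simp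
      rw [this, Real.cos_int_mul_two_pi]
    rw [Finset.sum_congr rfl fun j _ => this j]
    simp
  · rw [if_neg hk]
    have := sum_exp_int N hN k hk
    have hre : ∀ j : Fin N, Real.cos (2 * Real.pi * k * j / N)
        = (Complex.exp (2 * Real.pi * Complex.I * k * j / N)).re := by
      intro j
      have : (2 * Real.pi * Complex.I * k * j / N : ℂ)
          = ((2 * Real.pi * k * j / N : ℝ) : ℂ) * Complex.I := by
        push_cast; ring
      rw [this, Complex.exp_ofReal_mul_I_re]
    rw [Finset.sum_congr rfl fun j _ => hre j, ← Complex.re_sum, this]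
    simp

lemma sum_sin_int (N : ℕ) (hN : 0 < N) (k : ℤ) :
    ∑ j : Fin N, Real.sin (2 * Real.pi * k * j / N) = 0 := by
  by_cases hk : (N:ℤ) ∣ k
  · obtain ⟨m, rfl⟩ := hk
    have : ∀ j : Fin N, Real.sin (2 * Real.pi * (↑(↑N * m):ℝ) * j / N) = 0 := by
      intro j
      have : 2 * Real.pi * (↑(↑N * m):ℝ) * j / N = ((2 * m * j : ℤ) : ℝ) * Real.pi := by
        push_cast
        field_simp
      rw [this, Real.sin_int_mul_pi]
    rw [Finset.sum_congr rfl fun j _ => this j]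
    simp
  · have := sum_exp_int N hN k hk
    have him : ∀ j : Fin N, Real.sin (2 * Real.pi * k * j / N)
        = (Complex.exp (2 * Real.pi * Complex.I * k * j / N)).im := by
      intro j
      have : (2 * Real.pi * Complex.I * k * j / N : ℂ)
          = ((2 * Real.pi * k * j / N : ℝ) : ℂ) * Complex.I := by
        push_cast; ring
      rw [this, Complex.exp_ofReal_mul_I_im]
    rw [Finset.sum_congr rfl fun j _ => him j, ← Complex.im_sum, this]
    simp

lemma l2_norm_diagonal {n : ℕ} (v : Fin n → ℝ) (c : ℝ)
    (hle : ∀ i, |v i| ≤ c) (hex : ∃ i, |v i| = c) :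
    ‖(Matrix.diagonal v : Matrix (Fin n) (Fin n) ℝ)‖ = c := by
  obtain ⟨i₀, hi₀⟩ := hex
  have hc0 : 0 ≤ c := hi₀ ▸ abs_nonneg _
  rw [Matrix.l2_opNorm_def]
  apply ContinuousLinearMap.opNorm_eq_of_bounds hc0
  · intro x
    simp only [LinearEquiv.trans_apply, Matrix.toEuclideanLin_apply,
      LinearMap.coe_toContinuousLinearMap']
    rw [EuclideanSpace.norm_eq, EuclideanSpace.norm_eq]
    rw [← Real.sqrt_sq hc0, ← Real.sqrt_mul (by positivity)]
    apply Real.sqrt_le_sqrt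
    rw [Finset.mul_sum]
    apply Finset.sum_le_sum
    intro i _
    simp only [WithLp.equiv_symm_apply, WithLp.equiv_apply, PiLp.toLp_apply]
    rw [Matrix.mulVec_diagonal]
    show ‖v i * x i‖ ^ 2 ≤ c ^ 2 * ‖x i‖ ^ 2
    have h1 : ‖v i * x i‖ ^ 2 = (v i)^2 * ‖x i‖^2 := by
      rw [norm_mul]; rw [mul_pow]; congr 1; rw [Real.norm_eq_abs, sq_abs]
    rw [h1]
    have h2 : (v i)^2 ≤ c^2 := by
      rw [← sq_abs]; exact pow_le_pow_left₀ (abs_nonneg _) (hle i) 2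
    nlinarith [sq_nonneg (‖x i‖), norm_nonneg (x i)]
  · intro B hB hb
    have hkey := hb (EuclideanSpace.single i₀ 1)
    simp only [LinearEquiv.trans_apply, Matrix.toEuclideanLin_apply,
      LinearMap.coe_toContinuousLinearMap'] at hkey
    rw [EuclideanSpace.norm_single] at hkey
    have hx : ((WithLp.equiv 2 (Fin n → ℝ)).symm
        (Matrix.diagonal v *ᵥ (WithLp.equiv 2 (Fin n → ℝ)) (EuclideanSpace.single i₀ 1)))
        = (EuclideanSpace.single i₀ (v i₀) : EuclideanSpace ℝ (Fin n)) := by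
      ext i
      simp only [WithLp.equiv_symm_apply, WithLp.equiv_apply, PiLp.toLp_apply]
      rw [Matrix.mulVec_diagonal]
      by_cases h : i = i₀ <;> simp [EuclideanSpace.single_apply, h]
    rw [show ‖WithLp.toLp 2 (diagonal v *ᵥ (EuclideanSpace.single i₀ 1).ofLp)‖
        = ‖(EuclideanSpace.single i₀ (v i₀) : EuclideanSpace ℝ (Fin n))‖ from congrArg norm hx,
      EuclideanSpace.norm_single] at hkey
    rw [Real.norm_eq_abs] at hkey
    calc c = |v i₀| := hi₀.symm
      _ ≤ B * 1 := by simpa using hkey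
      _ = B := mul_one B

lemma not_dvd_of_abs (N : ℕ) {a : ℤ} (h0 : a ≠ 0) (h : |a| < N) : ¬(N:ℤ) ∣ a := by
  intro hd
  have := Int.le_of_dvd (abs_pos.mpr h0) ((dvd_abs _ _).mpr hd)
  omega

lemma theta_diff (N k k' : ℕ) (hN : 0 < N) (j : Fin N) :
    (k:ℝ) * theta N j - (k':ℝ) * theta N j = 2 * Real.pi * (((k:ℤ) - k' : ℤ):ℝ) * j / N := by
  unfold theta; push_cast; ring

lemma theta_sum (N k k' : ℕ) (hN : 0 < N) (j : Fin N) :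
    (k:ℝ) * theta N j + (k':ℝ) * theta N j = 2 * Real.pi * (((k:ℤ) + k' : ℤ):ℝ) * j / N := by
  unfold theta; push_cast; ring

lemma sum_cos_mul_cos (N k k' : ℕ) (hN : 0 < N)
    (hplus : ¬(N:ℤ) ∣ ((k:ℤ) + k')) (hminus : k ≠ k' → ¬(N:ℤ) ∣ ((k:ℤ) - k')) :
    ∑ j : Fin N, Real.cos (k * theta N j) * Real.cos (k' * theta N j)
      = if k = k' then (N:ℝ)/2 else 0 := by
  have hpt : ∀ j : Fin N, Real.cos (k * theta N j) * Real.cos (k' * theta N j)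
      = (Real.cos (2 * Real.pi * (((k:ℤ) - k' : ℤ):ℝ) * j / N)
        + Real.cos (2 * Real.pi * (((k:ℤ) + k' : ℤ):ℝ) * j / N)) / 2 := by
    intro j
    rw [← theta_diff N k k' hN j, ← theta_sum N k k' hN j, Real.cos_sub, Real.cos_add]
    ring
  rw [Finset.sum_congr rfl fun j _ => hpt j, ← Finset.sum_div, Finset.sum_add_distrib,
    sum_cos_int N hN _, sum_cos_int N hN _, if_neg hplus]
  by_cases hkk : k = k'
  · subst hkk; simp
  · rw [if_neg (hminus hkk), if_neg hkk]; simp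

lemma sum_sin_mul_sin (N k k' : ℕ) (hN : 0 < N)
    (hplus : ¬(N:ℤ) ∣ ((k:ℤ) + k')) (hminus : k ≠ k' → ¬(N:ℤ) ∣ ((k:ℤ) - k')) :
    ∑ j : Fin N, Real.sin (k * theta N j) * Real.sin (k' * theta N j)
      = if k = k' then (N:ℝ)/2 else 0 := by
  have hpt : ∀ j : Fin N, Real.sin (k * theta N j) * Real.sin (k' * theta N j)
      = (Real.cos (2 * Real.pi * (((k:ℤ) - k' : ℤ):ℝ) * j / N)
        - Real.cos (2 * Real.pi * (((k:ℤ) + k' : ℤ):ℝ) * j / N)) / 2 := by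
    intro j
    rw [← theta_diff N k k' hN j, ← theta_sum N k k' hN j, Real.cos_sub, Real.cos_add]
    ring
  rw [Finset.sum_congr rfl fun j _ => hpt j, ← Finset.sum_div, Finset.sum_sub_distrib,
    sum_cos_int N hN _, sum_cos_int N hN _, if_neg hplus]
  by_cases hkk : k = k'
  · subst hkk; simp
  · rw [if_neg (hminus hkk), if_neg hkk]; simp

lemma sum_cos_mul_sin (N k k' : ℕ) (hN : 0 < N) :
    ∑ j : Fin N, Real.cos (k * theta N j) * Real.sin (k' * theta N j) = 0 := by
  have hpt : ∀ j : Fin N, Real.cos (k * theta N j) * Real.sin (k' * theta N j)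
      = (Real.sin (2 * Real.pi * (((k:ℤ) + k' : ℤ):ℝ) * j / N)
        - Real.sin (2 * Real.pi * (((k:ℤ) - k' : ℤ):ℝ) * j / N)) / 2 := by
    intro j
    rw [← theta_diff N k k' hN j, ← theta_sum N k k' hN j, Real.sin_sub, Real.sin_add]
    ring
  rw [Finset.sum_congr rfl fun j _ => hpt j, ← Finset.sum_div, Finset.sum_sub_distrib,
    sum_sin_int N hN _, sum_sin_int N hN _]
  simp

lemma sum_cos_row (N k : ℕ) (hN : 0 < N) :
    ∑ j : Fin N, Real.cos (k * theta N j) = if (N:ℤ) ∣ (k:ℤ) then (N:ℝ) else 0 := by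
  have hpt : ∀ j : Fin N, Real.cos (k * theta N j)
      = Real.cos (2 * Real.pi * ((k:ℤ):ℝ) * j / N) := by
    intro j; unfold theta; push_cast; ring_nf
  rw [Finset.sum_congr rfl fun j _ => hpt j, sum_cos_int N hN]

lemma sum_sin_row (N k : ℕ) (hN : 0 < N) :
    ∑ j : Fin N, Real.sin (k * theta N j) = 0 := by
  have hpt : ∀ j : Fin N, Real.sin (k * theta N j)
      = Real.sin (2 * Real.pi * ((k:ℤ):ℝ) * j / N) := by
    intro j; unfold theta; push_cast; ring_nf
  rw [Finset.sum_congr rfl fun j _ => hpt j, sum_sin_int N hN]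


lemma Ttheta_mul_transpose (M : ℕ) :
    Ttheta M * (Ttheta M)ᵀ =
      (((2*M+1:ℕ):ℝ)/2) • Matrix.diagonal (fun i : Fin (2*M+1) => if i.val = 0 then 2 else 1) := by
  set N := 2*M+1 with hNdef
  have hN : 0 < N := by omega
  ext i i'
  rw [Matrix.mul_apply]
  simp only [Matrix.transpose_apply, Matrix.smul_apply, Matrix.diagonal_apply, smul_eq_mul]
  set k := (i.val+1)/2 with hk
  set k' := (i'.val+1)/2 with hk'
  have hiN : i.val < N := i.isLt
  have hi'N : i'.val < N := i'.isLt
  by_cases hi : i.val = 0 <;> by_cases hi' : i'.val = 0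
  · -- both zero
    have hii : i = i' := Fin.ext (by omega)
    rw [if_pos hii, if_pos hi]
    simp only [Ttheta, hi, hi', if_pos, mul_one]
    simp [Finset.card_univ]
  · -- i = 0, i' ≠ 0
    have hii : ¬ i = i' := fun h => hi' (h ▸ hi)
    rw [if_neg hii, mul_zero]
    have hk'1 : 1 ≤ k' := by omega
    have hk'M : k' ≤ M := by omega
    have hnd : ¬ (N:ℤ) ∣ (k':ℤ) := by
      apply not_dvd_of_abs
      · exact_mod_cast (by omega : k' ≠ 0)
      · rw [abs_of_nonneg (by positivity)]; push_cast; omega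
    simp only [Ttheta, if_pos hi, if_neg hi', one_mul]
    by_cases hp : i'.val % 2 = 1
    · simp only [if_pos hp]
      rw [show ((i'.val+1)/2 : ℕ) = k' from rfl, sum_cos_row N k' hN, if_neg hnd]
    · simp only [if_neg hp]
      exact sum_sin_row N k' hN
  · -- i ≠ 0, i' = 0
    have hii : ¬ i = i' := fun h => hi (h ▸ hi')
    rw [if_neg hii, mul_zero]
    have hk1 : 1 ≤ k := by omega
    have hkM : k ≤ M := by omega
    have hnd : ¬ (N:ℤ) ∣ (k:ℤ) := by
      apply not_dvd_of_abs
      · exact_mod_cast (by omega : k ≠ 0)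
      · rw [abs_of_nonneg (by positivity)]; push_cast; omega
    simp only [Ttheta, if_neg hi, if_pos hi', mul_one]
    by_cases hp : i.val % 2 = 1
    · simp only [if_pos hp]
      rw [show ((i.val+1)/2 : ℕ) = k from rfl, sum_cos_row N k hN, if_neg hnd]
    · simp only [if_neg hp]
      exact sum_sin_row N k hN
  · -- both nonzero
    have hk1 : 1 ≤ k := by omega
    have hkM : k ≤ M := by omega
    have hk'1 : 1 ≤ k' := by omega
    have hk'M : k' ≤ M := by omega
    have hplus : ¬ (N:ℤ) ∣ ((k:ℤ) + k') := by
      apply not_dvd_of_abs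
      · omega
      · rw [abs_of_nonneg (by positivity)]; push_cast; omega
    have hminus : k ≠ k' → ¬ (N:ℤ) ∣ ((k:ℤ) - k') := by
      intro hne
      apply not_dvd_of_abs
      · omega
      · rw [abs_lt]; push_cast; omega
    have hiffc : i.val % 2 = i'.val % 2 → (k = k' ↔ i = i') := by
      intro hpar
      constructor
      · intro h; exact Fin.ext (by omega)
      · intro h; rw [hk, hk', h]
    simp only [Ttheta, if_neg hi, if_neg hi']
    by_cases hp : i.val % 2 = 1 <;> by_cases hp' : i'.val % 2 = 1
    · -- cos cos
      simp only [if_pos hp, if_pos hp']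
      rw [show ((i.val+1)/2 : ℕ) = k from rfl, show ((i'.val+1)/2 : ℕ) = k' from rfl,
        sum_cos_mul_cos N k k' hN hplus hminus]
      have hiff := hiffc (by omega)
      by_cases hkk : k = k'
      · rw [if_pos hkk, if_pos (hiff.mp hkk), hNdef]; ring
      · rw [if_neg hkk, if_neg (fun h => hkk (hiff.mpr h)), mul_zero]
    · -- cos sin
      simp only [if_pos hp, if_neg hp']
      rw [show ((i.val+1)/2 : ℕ) = k from rfl, show ((i'.val+1)/2 : ℕ) = k' from rfl,
        sum_cos_mul_sin N k k' hN]
      have : ¬ i = i' := fun h => hp' (h ▸ hp)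
      rw [if_neg this, mul_zero]
    · -- sin cos
      simp only [if_neg hp, if_pos hp']
      rw [show ((i.val+1)/2 : ℕ) = k from rfl, show ((i'.val+1)/2 : ℕ) = k' from rfl]
      rw [Finset.sum_congr rfl (fun j _ => mul_comm (Real.sin (k * theta N j)) (Real.cos (k' * theta N j)))]
      rw [sum_cos_mul_sin N k' k hN]
      have : ¬ i = i' := fun h => hp (h ▸ hp')
      rw [if_neg this, mul_zero]
    · -- sin sin
      simp only [if_neg hp, if_neg hp']
      rw [show ((i.val+1)/2 : ℕ) = k from rfl, show ((i'.val+1)/2 : ℕ) = k' from rfl,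
        sum_sin_mul_sin N k k' hN hplus hminus]
      have hiff := hiffc (by omega)
      by_cases hkk : k = k'
      · rw [if_pos hkk, if_pos (hiff.mp hkk), hNdef]; ring
      · rw [if_neg hkk, if_neg (fun h => hkk (hiff.mpr h)), mul_zero]

/-- For `K₂ = T_R T_θ` with `R₀ = R`:
`K₂K₂ᵀ = (N/2)·diag(2, 1, 1, 1/4, 1/4, …, 1/M², 1/M²)`, and hence
`cond₂(K₂) = √2·M`, independently of `R`. -/
theorem K2_mul_transpose_and_cond (M : ℕ) (hM : 1 ≤ M) (R : ℝ) (hR : 0 < R) :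
    TR M R R * Ttheta M * (TR M R R * Ttheta M)ᵀ =
      (((2*M+1 : ℕ) : ℝ) / 2) •
        Matrix.diagonal (fun i : Fin (2*M+1) =>
          if i.val = 0 then 2 else (1 / (((i.val+1)/2 : ℕ) : ℝ)) ^ 2) ∧
    ‖TR M R R * Ttheta M‖ * ‖(TR M R R * Ttheta M)⁻¹‖ = Real.sqrt 2 * M := by
  have hN : 0 < 2*M+1 := by omega
  have hNR : (0:ℝ) < ((2*M+1:ℕ):ℝ) := by positivity
  set w : Fin (2*M+1) → ℝ := fun i =>
    if i.val = 0 then 1 else -(1 / (((i.val+1)/2 : ℕ) : ℝ)) with hwdef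
  have hTR : TR M R R = Matrix.diagonal w := by
    unfold TR
    refine congrArg Matrix.diagonal (funext fun i => ?_)
    by_cases h : i.val = 0
    · simp [hwdef, h, (Fin.ext h : i = 0)]
    · rw [if_neg h, hwdef]
      simp only [if_neg h]
      rw [div_self hR.ne', one_pow, mul_one]
  -- frequency bounds for nonzero rows
  have hkfact : ∀ i : Fin (2*M+1), i.val ≠ 0 →
      1 ≤ (i.val+1)/2 ∧ (i.val+1)/2 ≤ M := by
    intro i hi
    have := i.isLt
    omega
  -- Part 1
  have part1 : TR M R R * Ttheta M * (TR M R R * Ttheta M)ᵀ =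
      (((2*M+1 : ℕ) : ℝ) / 2) •
        Matrix.diagonal (fun i : Fin (2*M+1) =>
          if i.val = 0 then 2 else (1 / (((i.val+1)/2 : ℕ) : ℝ)) ^ 2) := by
    rw [hTR, Matrix.transpose_mul, Matrix.diagonal_transpose]
    calc Matrix.diagonal w * Ttheta M * ((Ttheta M)ᵀ * Matrix.diagonal w)
        = Matrix.diagonal w * (Ttheta M * (Ttheta M)ᵀ) * Matrix.diagonal w := by
          rw [Matrix.mul_assoc, Matrix.mul_assoc, Matrix.mul_assoc]
      _ = Matrix.diagonal w *
            ((((2*M+1:ℕ):ℝ)/2) • Matrix.diagonal (fun i : Fin (2*M+1) => if i.val = 0 then 2 else 1))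
            * Matrix.diagonal w := by rw [Ttheta_mul_transpose]
      _ = (((2*M+1:ℕ):ℝ)/2) • (Matrix.diagonal w *
            Matrix.diagonal (fun i : Fin (2*M+1) => if i.val = 0 then 2 else 1)
            * Matrix.diagonal w) := by
          rw [Matrix.mul_smul, Matrix.smul_mul]
      _ = (((2*M+1:ℕ):ℝ)/2) • Matrix.diagonal (fun i : Fin (2*M+1) =>
            w i * (if i.val = 0 then 2 else 1) * w i) := by
          rw [Matrix.diagonal_mul_diagonal, Matrix.diagonal_mul_diagonal]
      _ = (((2*M+1 : ℕ) : ℝ) / 2) •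
          Matrix.diagonal (fun i : Fin (2*M+1) =>
            if i.val = 0 then 2 else (1 / (((i.val+1)/2 : ℕ) : ℝ)) ^ 2) := by
          refine congrArg (fun v => (((2*M+1:ℕ):ℝ)/2) • Matrix.diagonal v) (funext fun i => ?_)
          by_cases h : i.val = 0
          · simp [hwdef, h, (Fin.ext h : i = 0)]
          · simp only [hwdef, if_neg h]
            ring
  refine ⟨part1, ?_⟩
  -- Part 2
  set K := TR M R R * Ttheta M with hK
  set d : Fin (2*M+1) → ℝ := fun i =>
    (((2*M+1:ℕ):ℝ)/2) * (if i.val = 0 then 2 else (1 / (((i.val+1)/2 : ℕ) : ℝ)) ^ 2) with hd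
  have hKKH : K * Kᴴ = Matrix.diagonal d := by
    rw [Matrix.conjTranspose_eq_transpose_of_trivial, part1, ← Matrix.diagonal_smul]
    rfl
  have hdpos : ∀ i, 0 < d i := by
    intro i
    rw [hd]
    by_cases h : i.val = 0
    · simp only [if_pos h]; positivity
    · simp only [if_neg h]
      have hk := hkfact i h
      have : (0:ℝ) < (((i.val+1)/2 : ℕ) : ℝ) := by
        have : 1 ≤ (i.val+1)/2 := hk.1
        exact_mod_cast Nat.pos_of_ne_zero (by omega)
      positivity
  have hdle : ∀ i, d i ≤ ((2*M+1:ℕ):ℝ) := by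
    intro i
    rw [hd]
    by_cases h : i.val = 0
    · simp only [if_pos h]; linarith
    · simp only [if_neg h]
      have hk := hkfact i h
      have h1 : (1:ℝ) ≤ (((i.val+1)/2 : ℕ) : ℝ) := by exact_mod_cast hk.1
      have h2 : (1 / (((i.val+1)/2 : ℕ) : ℝ)) ^ 2 ≤ 1 := by
        have : (1 / (((i.val+1)/2 : ℕ) : ℝ)) ≤ 1 := by
          rw [div_le_one (by linarith)]; exact h1
        have h0 : (0:ℝ) ≤ 1 / (((i.val+1)/2 : ℕ) : ℝ) := by positivity
        nlinarith
      nlinarith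
  have hzero : (0 : Fin (2*M+1)).val = 0 := rfl
  have hd0 : d 0 = ((2*M+1:ℕ):ℝ) := by
    rw [hd]; simp only [hzero, if_pos]; ring
  -- norm of K
  have hnorm2 : ‖K‖ * ‖K‖ = ((2*M+1:ℕ):ℝ) := by
    have h1 := Matrix.l2_opNorm_conjTranspose_mul_self (Kᴴ)
    rw [Matrix.conjTranspose_conjTranspose, Matrix.l2_opNorm_conjTranspose] at h1
    rw [← h1, hKKH]
    apply l2_norm_diagonal
    · intro i
      rw [abs_of_pos (hdpos i)]
      exact hdle i
    · exact ⟨0, by rw [abs_of_pos (hdpos 0), hd0]⟩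
  have hnormK : ‖K‖ = Real.sqrt ((2*M+1:ℕ):ℝ) := by
    rw [← hnorm2, Real.sqrt_mul_self (norm_nonneg K)]
  -- invertibility
  have hdet : IsUnit K.det := by
    have h1 : K.det * K.det = (Matrix.diagonal d).det := by
      calc K.det * K.det = K.det * (Kᴴ).det := by
            rw [Matrix.conjTranspose_eq_transpose_of_trivial, Matrix.det_transpose]
        _ = (K * Kᴴ).det := (Matrix.det_mul _ _).symm
        _ = (Matrix.diagonal d).det := by rw [hKKH]
    have h2 : (Matrix.diagonal d).det ≠ 0 := by
      rw [Matrix.det_diagonal]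
      exact Finset.prod_ne_zero_iff.mpr fun i _ => (hdpos i).ne'
    have : K.det ≠ 0 := fun h => h2 (by rw [← h1, h, mul_zero])
    exact isUnit_iff_ne_zero.mpr this
  -- inverse of the diagonal
  have hdiaginv : (Matrix.diagonal d)⁻¹ = Matrix.diagonal (fun i => (d i)⁻¹) := by
    apply Matrix.inv_eq_right_inv
    rw [Matrix.diagonal_mul_diagonal]
    rw [show (fun i => d i * (d i)⁻¹) = fun _ => (1:ℝ) from
      funext fun i => mul_inv_cancel₀ (hdpos i).ne']
    exact Matrix.diagonal_one
  have hKinvH : (K⁻¹)ᴴ * K⁻¹ = Matrix.diagonal (fun i => (d i)⁻¹) := by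
    rw [Matrix.conjTranspose_nonsing_inv, ← Matrix.mul_inv_rev, hKKH, hdiaginv]
  -- norm of K⁻¹
  have hMR : (0:ℝ) < (M:ℝ) := by exact_mod_cast hM
  have hcval : (0:ℝ) < 2 * (M:ℝ)^2 / ((2*M+1:ℕ):ℝ) := by positivity
  have hnorm2inv : ‖K⁻¹‖ * ‖K⁻¹‖ = 2 * (M:ℝ)^2 / ((2*M+1:ℕ):ℝ) := by
    rw [← Matrix.l2_opNorm_conjTranspose_mul_self K⁻¹, hKinvH]
    apply l2_norm_diagonal
    · intro i
      rw [abs_of_pos (inv_pos.mpr (hdpos i))]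
      rw [hd]
      by_cases h : i.val = 0
      · simp only [if_pos h]
        rw [show ((2*M+1:ℕ):ℝ)/2*2 = ((2*M+1:ℕ):ℝ) by ring, inv_eq_one_div]
        gcongr
        have h1 : (1:ℝ) ≤ (M:ℝ) := by exact_mod_cast hM
        nlinarith [sq_nonneg ((M:ℝ)-1)]
      · simp only [if_neg h]
        have hk := hkfact i h
        have hk1 : (1:ℝ) ≤ (((i.val+1)/2 : ℕ) : ℝ) := by exact_mod_cast hk.1
        have hkM : (((i.val+1)/2 : ℕ) : ℝ) ≤ (M:ℝ) := by exact_mod_cast hk.2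
        have hkpos : (0:ℝ) < (((i.val+1)/2 : ℕ) : ℝ) := by linarith
        have he : ((2*M+1:ℕ):ℝ)/2 * (1/(((i.val+1)/2 : ℕ) : ℝ))^2
            = ((2*M+1:ℕ):ℝ) / (2*(((i.val+1)/2 : ℕ) : ℝ)^2) := by
          field_simp
        rw [he, inv_div]
        gcongr
    · refine ⟨⟨2*M, by omega⟩, ?_⟩
      have hval : ((⟨2*M, by omega⟩ : Fin (2*M+1)) : ℕ) = 2*M := rfl
      rw [abs_of_pos (inv_pos.mpr (hdpos _)), hd]
      simp only [hval]
      rw [if_neg (by omega : ¬ (2*M = 0))]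
      rw [show ((2*M+1)/2 : ℕ) = M by omega]
      rw [show ((2*M+1:ℕ):ℝ)/2 * (1/((M:ℕ):ℝ))^2 = ((2*M+1:ℕ):ℝ) / (2*((M:ℕ):ℝ)^2) by
        field_simp]
      rw [inv_div]
  have hnormKinv : ‖K⁻¹‖ = Real.sqrt (2 * (M:ℝ)^2 / ((2*M+1:ℕ):ℝ)) := by
    rw [← hnorm2inv, Real.sqrt_mul_self (norm_nonneg _)]
  rw [hnormK, hnormKinv, ← Real.sqrt_mul hNR.le]
  rw [show ((2*M+1:ℕ):ℝ) * (2*(M:ℝ)^2/((2*M+1:ℕ):ℝ)) = 2*(M:ℝ)^2 by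
    field_simp]
  rw [Real.sqrt_mul (by norm_num : (0:ℝ) ≤ 2), Real.sqrt_sq hMR.le]
end
end

section
/- Let N = 2M+1, M ≥ 1, ρ > 0, and S = T_θ^T S_{R_0}. The spectral condition number of S equals: √2·(ρ/R_0)^M if R_0 < ρ; √2·(ρ/R_0) if ρ ≤ R_0 < 2^{1/(2M)}ρ; (R_0/ρ)^{M-1} if 2^{1/(2M)}ρ ≤ R_0 < √2·ρ; and (1/√2)·(R_0/ρ)^M if R_0 ≥ √2·ρ. -/
set_option maxHeartbeats 1000000
set_option synthInstance.maxHeartbeats 1000000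


open Matrix
open scoped Matrix.Norms.L2Operator

noncomputable section

/-- The diagonal matrix `S_{R₀} = diag(1, (R₀/ρ), (R₀/ρ), …, (R₀/ρ)^M, (R₀/ρ)^M)`:
the diagonal entry at (0-based) index `i ≥ 1` is `(R₀/ρ)^k` with `k = (i+1)/2`. -/
def SR (M : ℕ) (ρ R₀ : ℝ) : Matrix (Fin (2*M+1)) (Fin (2*M+1)) ℝ :=
  Matrix.diagonal (fun i : Fin (2*M+1) =>
    if i.val = 0 then 1 else (R₀ / ρ) ^ ((i.val+1)/2 : ℕ))

lemma sum_exp_eq_zero (N : ℕ) (m : ℤ) (hm : m ≠ 0) (hm' : m.natAbs < N) :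
    ∑ j : Fin N, Complex.exp (((m : ℝ) * theta N j : ℝ) * Complex.I) = 0 := by
  have hN : 0 < N := lt_of_le_of_lt (Nat.zero_le _) hm'
  have hNC : (N : ℂ) ≠ 0 := Nat.cast_ne_zero.mpr hN.ne'
  set z : ℂ := Complex.exp ((2 * Real.pi * m / N : ℝ) * Complex.I) with hz
  have hpow : ∀ j : Fin N, Complex.exp (((m : ℝ) * theta N j : ℝ) * Complex.I) = z ^ (j : ℕ) := by
    intro j
    rw [hz, ← Complex.exp_nat_mul]
    congr 1
    push_cast [theta]
    field_simp
  rw [Finset.sum_congr rfl fun j _ => hpow j]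
  rw [Fin.sum_univ_eq_sum_range (fun j => z ^ j) N]
  have hz1 : z ≠ 1 := by
    intro h1
    rw [hz, Complex.exp_eq_one_iff] at h1
    obtain ⟨k, hk⟩ := h1
    have hI : (2 * Real.pi * m / N : ℝ) = (k : ℝ) * (2 * Real.pi) := by
      rw [show ((k : ℂ) * (2 * ↑Real.pi * Complex.I)) = ((k * (2 * Real.pi) : ℝ) : ℂ) * Complex.I by push_cast; ring] at hk
      exact_mod_cast mul_right_cancel₀ Complex.I_ne_zero hk
    have hpi : (0:ℝ) < Real.pi := Real.pi_pos
    have hNR : (N : ℝ) ≠ 0 := Nat.cast_ne_zero.mpr hN.ne'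
    have hmk : (m : ℝ) = (k : ℝ) * N := by
      field_simp at hI
      nlinarith [hI]
    have hmkz : m = k * N := by exact_mod_cast hmk
    rcases eq_or_ne k 0 with rfl | hk0
    · simp at hmkz; exact hm hmkz
    · have h1 : (1 : ℤ) ≤ |k| := Int.one_le_abs hk0
      have habs : |m| = |k| * N := by rw [hmkz, abs_mul]; simp
      have : (N:ℤ) ≤ |m| := by
        calc (N:ℤ) = 1 * N := by ring
        _ ≤ |k| * N := mul_le_mul_of_nonneg_right h1 (by positivity)
        _ = |m| := habs.symm
      rw [Int.abs_eq_natAbs] at this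
      omega
  rw [geom_sum_eq hz1]
  have hzN : z ^ N = 1 := by
    rw [hz, ← Complex.exp_nat_mul]
    rw [show (N : ℂ) * (((2 * Real.pi * m / N : ℝ)) * Complex.I) = (m : ℤ) * (2 * Real.pi * Complex.I) by push_cast; field_simp]
    exact Complex.exp_int_mul_two_pi_mul_I m
  rw [hzN]
  simp

lemma sum_cos_eq (N : ℕ) (hN : 0 < N) (m : ℤ) (hm' : m.natAbs < N) :
    ∑ j : Fin N, Real.cos ((m : ℝ) * theta N j) = if m = 0 then (N : ℝ) else 0 := by
  rcases eq_or_ne m 0 with rfl | hm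
  · simp
  · have := sum_exp_eq_zero N m hm hm'
    have hre := congrArg Complex.re this
    simp only [Complex.re_sum, Complex.exp_ofReal_mul_I_re, Complex.zero_re] at hre
    simp [hm, hre]

lemma sum_sin_eq (N : ℕ) (hN : 0 < N) (m : ℤ) (hm' : m.natAbs < N) :
    ∑ j : Fin N, Real.sin ((m : ℝ) * theta N j) = 0 := by
  rcases eq_or_ne m 0 with rfl | hm
  · simp
  · have := sum_exp_eq_zero N m hm hm'
    have him := congrArg Complex.im this
    simp only [Complex.im_sum, Complex.exp_ofReal_mul_I_im, Complex.zero_im] at him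
    exact him



lemma sum_cos_nat (N : ℕ) (hN : 0 < N) (a : ℕ) (ha : 1 ≤ a) (haN : a < N) :
    ∑ j : Fin N, Real.cos ((a : ℝ) * theta N j) = 0 := by
  have := sum_cos_eq N hN a (by omega)
  simpa [show (a:ℤ) ≠ 0 by omega, show a ≠ 0 by omega] using this

lemma sum_sin_nat (N : ℕ) (hN : 0 < N) (a : ℕ) (haN : a < N) :
    ∑ j : Fin N, Real.sin ((a : ℝ) * theta N j) = 0 := by
  have := sum_sin_eq N hN a (by omega)
  simpa using this

lemma sum_cc (N a b : ℕ) (ha : 1 ≤ a) (hb : 1 ≤ b) (hab : a + b < N) :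
    ∑ j : Fin N, Real.cos ((a : ℝ) * theta N j) * Real.cos ((b : ℝ) * theta N j) =
      if a = b then (N : ℝ)/2 else 0 := by
  have hN : 0 < N := by omega
  have h1 : ∀ j : Fin N, Real.cos ((a : ℝ) * theta N j) * Real.cos ((b : ℝ) * theta N j) =
      (Real.cos ((((a:ℤ) - b : ℤ) : ℝ) * theta N j) + Real.cos ((((a:ℤ) + b : ℤ) : ℝ) * theta N j)) / 2 := by
    intro j
    have h := Real.two_mul_cos_mul_cos ((a : ℝ) * theta N j) ((b : ℝ) * theta N j)
    push_cast
    rw [sub_mul, add_mul]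
    linarith [h]
  rw [Finset.sum_congr rfl fun j _ => h1 j, ← Finset.sum_div, Finset.sum_add_distrib,
    sum_cos_eq N hN _ (by omega), sum_cos_eq N hN _ (by omega)]
  rcases eq_or_ne a b with rfl | hne
  · simp [show (a:ℤ) + a ≠ 0 by omega]
  · simp [show (a:ℤ) - b ≠ 0 by omega, show (a:ℤ) + b ≠ 0 by omega, hne]

lemma sum_ss (N a b : ℕ) (ha : 1 ≤ a) (hb : 1 ≤ b) (hab : a + b < N) :
    ∑ j : Fin N, Real.sin ((a : ℝ) * theta N j) * Real.sin ((b : ℝ) * theta N j) =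
      if a = b then (N : ℝ)/2 else 0 := by
  have hN : 0 < N := by omega
  have h1 : ∀ j : Fin N, Real.sin ((a : ℝ) * theta N j) * Real.sin ((b : ℝ) * theta N j) =
      (Real.cos ((((a:ℤ) - b : ℤ) : ℝ) * theta N j) - Real.cos ((((a:ℤ) + b : ℤ) : ℝ) * theta N j)) / 2 := by
    intro j
    have h := Real.two_mul_sin_mul_sin ((a : ℝ) * theta N j) ((b : ℝ) * theta N j)
    push_cast
    rw [sub_mul, add_mul]
    linarith [h]
  rw [Finset.sum_congr rfl fun j _ => h1 j, ← Finset.sum_div, Finset.sum_sub_distrib,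
    sum_cos_eq N hN _ (by omega), sum_cos_eq N hN _ (by omega)]
  rcases eq_or_ne a b with rfl | hne
  · simp [show (a:ℤ) + a ≠ 0 by omega]
  · simp [show (a:ℤ) - b ≠ 0 by omega, show (a:ℤ) + b ≠ 0 by omega, hne]

lemma sum_sc (N a b : ℕ) (hab : a + b < N) :
    ∑ j : Fin N, Real.sin ((a : ℝ) * theta N j) * Real.cos ((b : ℝ) * theta N j) = 0 := by
  have hN : 0 < N := by omega
  have h1 : ∀ j : Fin N, Real.sin ((a : ℝ) * theta N j) * Real.cos ((b : ℝ) * theta N j) =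
      (Real.sin ((((a:ℤ) - b : ℤ) : ℝ) * theta N j) + Real.sin ((((a:ℤ) + b : ℤ) : ℝ) * theta N j)) / 2 := by
    intro j
    have h := Real.two_mul_sin_mul_cos ((a : ℝ) * theta N j) ((b : ℝ) * theta N j)
    push_cast
    rw [sub_mul, add_mul]
    linarith [h]
  rw [Finset.sum_congr rfl fun j _ => h1 j, ← Finset.sum_div, Finset.sum_add_distrib,
    sum_sin_eq N hN _ (by omega), sum_sin_eq N hN _ (by omega)]
  norm_num



/-- diagonal weights of `T Tᵀ` -/
def gw (M : ℕ) : Fin (2*M+1) → ℝ := fun i =>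
  if i.val = 0 then ((2*M+1 : ℕ) : ℝ) else ((2*M+1 : ℕ) : ℝ)/2

lemma gram (M : ℕ) : Ttheta M * (Ttheta M)ᵀ = Matrix.diagonal (gw M) := by
  ext i i'
  rw [Matrix.mul_apply, Matrix.diagonal_apply]
  simp only [transpose_apply]
  have hNpos : 0 < 2*M+1 := by omega
  have kfact : ∀ x : Fin (2*M+1), x.val ≠ 0 → 1 ≤ (x.val+1)/2 ∧ (x.val+1)/2 ≤ M := by
    intro x hx
    have := x.isLt
    omega
  by_cases hi : i.val = 0 <;> by_cases hi' : i'.val = 0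
  · have heq : i = i' := Fin.ext (by omega)
    simp only [Ttheta, hi, hi', reduceIte, one_mul, Finset.sum_const, Finset.card_univ,
      Fintype.card_fin, nsmul_eq_mul, mul_one]
    simp [heq, gw, hi']
  · have hne : i ≠ i' := fun h => hi' (h ▸ hi)
    simp only [Ttheta, hi, hi', reduceIte, one_mul]
    obtain ⟨hk1, hk2⟩ := kfact i' hi'
    by_cases hp : i'.val % 2 = 1 <;> simp only [hp, reduceIte]
    · rw [sum_cos_nat _ hNpos _ hk1 (by omega)]; simp [hne]
    · rw [sum_sin_nat _ hNpos _ (by omega)]; simp [hne]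
  · have hne : i ≠ i' := fun h => hi (h ▸ hi')
    simp only [Ttheta, hi, hi', reduceIte, mul_one]
    obtain ⟨hk1, hk2⟩ := kfact i hi
    by_cases hp : i.val % 2 = 1 <;> simp only [hp, reduceIte]
    · rw [sum_cos_nat _ hNpos _ hk1 (by omega)]; simp [hne]
    · rw [sum_sin_nat _ hNpos _ (by omega)]; simp [hne]
  · obtain ⟨hk1, hk2⟩ := kfact i hi
    obtain ⟨hk1', hk2'⟩ := kfact i' hi'
    have hiff : (i.val+1)/2 = (i'.val+1)/2 → i.val % 2 = i'.val % 2 → i = i' := by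
      intro h hpar
      refine Fin.ext ?_
      omega
    simp only [Ttheta, hi, hi', reduceIte]
    by_cases hp : i.val % 2 = 1 <;> by_cases hp' : i'.val % 2 = 1 <;>
      simp only [hp, hp', reduceIte]
    · rw [sum_cc _ _ _ hk1 hk1' (by omega)]
      by_cases h : i = i'
      · simp [h, gw, hi']
      · have : ¬ ((i.val+1)/2 = (i'.val+1)/2) := fun hh => h (hiff hh (by omega))
        simp [h, this]
    · have hcomm : ∀ j : Fin (2*M+1),
          Real.cos ((((i.val+1)/2 : ℕ) : ℝ) * theta (2*M+1) j) * Real.sin ((((i'.val+1)/2 : ℕ) : ℝ) * theta (2*M+1) j)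
          = Real.sin ((((i'.val+1)/2 : ℕ) : ℝ) * theta (2*M+1) j) * Real.cos ((((i.val+1)/2 : ℕ) : ℝ) * theta (2*M+1) j) :=
        fun j => mul_comm _ _
      rw [Finset.sum_congr rfl fun j _ => hcomm j, sum_sc _ _ _ (by omega)]
      have hne : i ≠ i' := by intro h; rw [h] at hp; exact hp' hp
      simp [hne]
    · rw [sum_sc _ _ _ (by omega)]
      have hne : i ≠ i' := by intro h; rw [h] at hp; exact hp hp'
      simp [hne]
    · rw [sum_ss _ _ _ hk1 hk1' (by omega)]
      by_cases h : i = i'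
      · simp [h, gw, hi']
      · have : ¬ ((i.val+1)/2 = (i'.val+1)/2) := fun hh => h (hiff hh (by omega))
        simp [h, this]


lemma l2_opNorm_diag {n : Type*} [Fintype n] [DecidableEq n] (v : n → ℝ) (C : ℝ)
    (hb : ∀ i, |v i| ≤ C) (hex : ∃ i, |v i| = C) :
    ‖Matrix.diagonal v‖ = C := by
  obtain ⟨i₀, hi₀⟩ := hex
  have hC : 0 ≤ C := hi₀ ▸ abs_nonneg _
  rw [Matrix.l2_opNorm_def]
  apply le_antisymm
  · apply ContinuousLinearMap.opNorm_le_bound _ hC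
    intro x
    have hval : ((Matrix.toEuclideanLin.trans LinearMap.toContinuousLinearMap)
        (Matrix.diagonal v) x : EuclideanSpace ℝ n) = Matrix.toEuclideanLin (Matrix.diagonal v) x := rfl
    rw [hval, Matrix.toEuclideanLin_apply]
    rw [EuclideanSpace.norm_eq, EuclideanSpace.norm_eq]
    have h1 : ∀ i, ‖(WithLp.toLp 2 (Matrix.diagonal v *ᵥ x.ofLp)) i‖ ^ 2
        = (v i)^2 * ‖x i‖^2 := by
      intro i
      rw [PiLp.toLp_apply, Matrix.mulVec_diagonal]
      simp only [Real.norm_eq_abs, sq_abs, mul_pow]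
    rw [Finset.sum_congr rfl fun i _ => h1 i]
    rw [show C * Real.sqrt (∑ i, ‖x i‖^2) = Real.sqrt (C^2 * ∑ i, ‖x i‖^2) by
      rw [Real.sqrt_mul (by positivity), Real.sqrt_sq hC]]
    apply Real.sqrt_le_sqrt
    rw [Finset.mul_sum]
    apply Finset.sum_le_sum
    intro i _
    have : (v i)^2 ≤ C^2 := by
      have := hb i
      nlinarith [abs_nonneg (v i), sq_abs (v i)]
    nlinarith [norm_nonneg (x i), sq_nonneg (‖x i‖)]
  · have hle := ((Matrix.toEuclideanLin.trans LinearMap.toContinuousLinearMap)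
        (Matrix.diagonal v)).le_opNorm (EuclideanSpace.single i₀ (1:ℝ))
    rw [EuclideanSpace.norm_single] at hle
    have hval : ((Matrix.toEuclideanLin.trans LinearMap.toContinuousLinearMap)
        (Matrix.diagonal v) (EuclideanSpace.single i₀ (1:ℝ)) : EuclideanSpace ℝ n)
        = EuclideanSpace.single i₀ (v i₀) := by
      apply PiLp.ext
      intro j
      have : ((Matrix.toEuclideanLin.trans LinearMap.toContinuousLinearMap)
          (Matrix.diagonal v) (EuclideanSpace.single i₀ (1:ℝ)) : EuclideanSpace ℝ n) j
          = (Matrix.diagonal v *ᵥ (WithLp.equiv 2 (n → ℝ)) (EuclideanSpace.single i₀ (1:ℝ))) j := rfl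
      rw [this, Matrix.mulVec_diagonal]
      simp [EuclideanSpace.single_apply]
      by_cases h : j = i₀ <;> simp [h]
    rw [hval, EuclideanSpace.norm_single, Real.norm_eq_abs] at hle
    calc C = |v i₀| := hi₀.symm
    _ ≤ _ := by simpa using hle


lemma norms_of_gram {n : Type*} [Fintype n] [DecidableEq n]
    (S : Matrix n n ℝ) (d : n → ℝ) (hd : ∀ i, 0 < d i) (h : Sᵀ * S = Matrix.diagonal d)
    (a b : ℝ) (hab : ∀ i, b ≤ d i ∧ d i ≤ a) (hexa : ∃ i, d i = a) (hexb : ∃ i, d i = b) :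
    ‖S‖ * ‖S⁻¹‖ = Real.sqrt a / Real.sqrt b := by
  cases isEmpty_or_nonempty n with
  | inl he =>
    obtain ⟨i, _⟩ := hexa
    exact absurd (he.elim i) not_false
  | inr hne =>
  obtain ⟨ia, hia⟩ := hexa
  obtain ⟨ib, hib⟩ := hexb
  have ha : 0 < a := hia ▸ hd ia
  have hb : 0 < b := hib ▸ hd ib
  -- ‖S‖ = √a
  have hSt : Sᴴ = Sᵀ := Matrix.conjTranspose_eq_transpose_of_trivial S
  have hnS2 : ‖S‖ * ‖S‖ = a := by
    rw [← Matrix.l2_opNorm_conjTranspose_mul_self, hSt, h]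
    exact l2_opNorm_diag d a
      (fun i => by rw [abs_of_pos (hd i)]; exact (hab i).2)
      ⟨ia, by rw [abs_of_pos (hd ia)]; exact hia⟩
  have hnS : ‖S‖ = Real.sqrt a := by
    rw [← hnS2, Real.sqrt_mul_self (norm_nonneg S)]
  -- invertibility
  have hdet : IsUnit S.det := by
    have h1 : S.det * S.det = ∏ i, d i := by
      have := congrArg Matrix.det h
      rwa [Matrix.det_mul, Matrix.det_transpose, Matrix.det_diagonal] at this
    have h2 : 0 < ∏ i, d i := Finset.prod_pos fun i _ => hd i
    rw [isUnit_iff_ne_zero]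
    intro h0
    rw [h0, mul_zero] at h1
    rw [← h1] at h2
    exact lt_irrefl 0 h2
  -- S⁻¹ (S⁻¹)ᵀ = diagonal d⁻¹
  have hinv : S⁻¹ * (S⁻¹)ᵀ = Matrix.diagonal (fun i => (d i)⁻¹) := by
    have h1 : (Sᵀ * S)⁻¹ = S⁻¹ * (S⁻¹)ᵀ := by
      rw [Matrix.mul_inv_rev, Matrix.transpose_nonsing_inv]
    have h2 : Matrix.diagonal d * Matrix.diagonal (fun i => (d i)⁻¹) = 1 := by
      rw [Matrix.diagonal_mul_diagonal]
      have : (fun i => d i * (d i)⁻¹) = fun _ : n => (1:ℝ) := by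
        funext i
        exact mul_inv_cancel₀ (hd i).ne'
      rw [this, Matrix.diagonal_one]
    rw [← h1, Matrix.inv_eq_right_inv (by rw [h]; exact h2)]
  have hnI2 : ‖S⁻¹‖ * ‖S⁻¹‖ = b⁻¹ := by
    have h1 : ((S⁻¹)ᵀ)ᴴ = S⁻¹ := by
      rw [Matrix.conjTranspose_eq_transpose_of_trivial, Matrix.transpose_transpose]
    have h2 : ‖(S⁻¹)ᵀ‖ = ‖S⁻¹‖ := by
      rw [← Matrix.conjTranspose_eq_transpose_of_trivial, Matrix.l2_opNorm_conjTranspose]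
    rw [← h2, ← Matrix.l2_opNorm_conjTranspose_mul_self ((S⁻¹)ᵀ), h1, hinv]
    exact l2_opNorm_diag _ b⁻¹
      (fun i => by
        rw [abs_of_pos (inv_pos.mpr (hd i))]
        exact inv_anti₀ hb (hab i).1)
      ⟨ib, by rw [abs_of_pos (inv_pos.mpr (hd ib)), hib]⟩
  have hnI : ‖S⁻¹‖ = Real.sqrt b⁻¹ := by
    rw [← hnI2, Real.sqrt_mul_self (norm_nonneg _)]
  rw [hnS, hnI, Real.sqrt_inv, div_eq_mul_inv]

def dvec (M : ℕ) (ρ R₀ : ℝ) : Fin (2*M+1) → ℝ := fun i =>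
  if i.val = 0 then ((2*M+1:ℕ):ℝ) else ((2*M+1:ℕ):ℝ)/2 * (R₀/ρ)^(2*((i.val+1)/2))

lemma S_gram (M : ℕ) (ρ R₀ : ℝ) :
    ((Ttheta M)ᵀ * SR M ρ R₀)ᵀ * ((Ttheta M)ᵀ * SR M ρ R₀) = Matrix.diagonal (dvec M ρ R₀) := by
  rw [Matrix.transpose_mul, Matrix.transpose_transpose, SR, Matrix.diagonal_transpose,
    Matrix.mul_assoc, ← Matrix.mul_assoc (Ttheta M), _root_.gram, Matrix.diagonal_mul_diagonal,
    Matrix.diagonal_mul_diagonal]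
  apply congrArg Matrix.diagonal
  funext i
  by_cases h : i.val = 0
  · simp [h, gw, dvec]
  · simp only [gw, dvec, if_neg h]
    rw [show 2*((i.val+1)/2) = ((i.val+1)/2) + ((i.val+1)/2) by ring, pow_add]
    ring

/-- The spectral condition number of `S = T_θᵀ S_{R₀}` on a circular boundary of radius `ρ`:
`√2(ρ/R₀)^M` for `R₀ < ρ`; `√2(ρ/R₀)` for `ρ ≤ R₀ < 2^{1/(2M)}ρ`;
`(R₀/ρ)^{M-1}` for `2^{1/(2M)}ρ ≤ R₀ < √2ρ`; and `(1/√2)(R₀/ρ)^M` for `R₀ ≥ √2ρ`. -/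
theorem condS_piecewise (M : ℕ) (hM : 1 ≤ M) (ρ R₀ : ℝ) (hρ : 0 < ρ) (hR₀ : 0 < R₀) :
    (R₀ < ρ →
      ‖(Ttheta M)ᵀ * SR M ρ R₀‖ * ‖((Ttheta M)ᵀ * SR M ρ R₀)⁻¹‖ =
        Real.sqrt 2 * (ρ / R₀) ^ M) ∧
    (ρ ≤ R₀ → R₀ < (2 : ℝ) ^ ((1 : ℝ) / (2 * M)) * ρ →
      ‖(Ttheta M)ᵀ * SR M ρ R₀‖ * ‖((Ttheta M)ᵀ * SR M ρ R₀)⁻¹‖ =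
        Real.sqrt 2 * (ρ / R₀)) ∧
    ((2 : ℝ) ^ ((1 : ℝ) / (2 * M)) * ρ ≤ R₀ → R₀ < Real.sqrt 2 * ρ →
      ‖(Ttheta M)ᵀ * SR M ρ R₀‖ * ‖((Ttheta M)ᵀ * SR M ρ R₀)⁻¹‖ =
        (R₀ / ρ) ^ (M - 1)) ∧
    (Real.sqrt 2 * ρ ≤ R₀ →
      ‖(Ttheta M)ᵀ * SR M ρ R₀‖ * ‖((Ttheta M)ᵀ * SR M ρ R₀)⁻¹‖ =
        (1 / Real.sqrt 2) * (R₀ / ρ) ^ M) := by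
  have hq : 0 < R₀ / ρ := div_pos hR₀ hρ
  set q := R₀ / ρ with hqdef
  set N : ℕ := 2*M+1 with hNdef
  have hNR : (0:ℝ) < (N:ℝ) := by positivity
  have hd : ∀ i, 0 < dvec M ρ R₀ i := by
    intro i
    by_cases h : i.val = 0 <;> simp [dvec, h, ← hqdef] <;> positivity
  have hgram := S_gram M ρ R₀
  have kfact : ∀ i : Fin N, i.val ≠ 0 → 1 ≤ (i.val+1)/2 ∧ (i.val+1)/2 ≤ M := by
    intro i hi
    have h2 : i.val < 2*M+1 := i.isLt
    omega
  have hd0 : dvec M ρ R₀ ⟨0, by omega⟩ = (N:ℝ) := by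
    simp only [dvec]
    rw [if_pos trivial, hNdef]
  have hiM : (2*M : ℕ) < 2*M+1 := by omega
  have hdM : dvec M ρ R₀ ⟨2*M, hiM⟩ = (N:ℝ)/2 * q^(2*M) := by
    simp only [dvec]
    rw [if_neg (show ¬((2*M : ℕ) = 0) by omega),
      show ((2*M : ℕ)+1)/2 = M from by omega, hqdef, hNdef]
  have hi1 : (1 : ℕ) < 2*M+1 := by omega
  have hd1 : dvec M ρ R₀ ⟨1, hi1⟩ = (N:ℝ)/2 * q^2 := by
    simp only [dvec]
    rw [if_neg (show ¬((1 : ℕ) = 0) by omega),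
      show (((1:ℕ)+1)/2) = 1 from by omega, hqdef, hNdef]
  have hdform : ∀ i : Fin (2*M+1), i.val ≠ 0 →
      dvec M ρ R₀ i = (N:ℝ)/2 * q^(2*((i.val+1)/2)) := by
    intro i hi
    simp only [dvec]
    rw [if_neg hi, hqdef, hNdef]
  have hdz : ∀ i : Fin (2*M+1), i.val = 0 → dvec M ρ R₀ i = (N:ℝ) := by
    intro i hi
    simp only [dvec]
    rw [if_pos hi, hNdef]
  have hqne : q ≠ 0 := hq.ne'
  have hinvq : ρ / R₀ = q⁻¹ := by rw [hqdef, inv_div]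
  have key : ∀ a b : ℝ, (∀ i, b ≤ dvec M ρ R₀ i ∧ dvec M ρ R₀ i ≤ a) →
      (∃ i, dvec M ρ R₀ i = a) → (∃ i, dvec M ρ R₀ i = b) →
      ‖(Ttheta M)ᵀ * SR M ρ R₀‖ * ‖((Ttheta M)ᵀ * SR M ρ R₀)⁻¹‖ = Real.sqrt a / Real.sqrt b :=
    fun a b hab hea heb => norms_of_gram _ _ hd hgram a b hab hea heb
  refine ⟨?_, ?_, ?_, ?_⟩
  · -- case 1 : q < 1
    intro h1
    have hq1 : q < 1 := (div_lt_one hρ).mpr h1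
    refine (key (N:ℝ) ((N:ℝ)/2 * q^(2*M)) ?_ ⟨_, hd0⟩ ⟨_, hdM⟩).trans ?_
    · intro i
      by_cases hi : i.val = 0
      · rw [hdz i hi]
        have h1 : q^(2*M) ≤ 1 := pow_le_one₀ hq.le hq1.le
        constructor
        · nlinarith [hNR]
        · exact le_refl _
      · obtain ⟨hk1, hk2⟩ := kfact i hi
        rw [hdform i hi]
        have h1 : q^(2*M) ≤ q^(2*((i.val+1)/2)) :=
          pow_le_pow_of_le_one hq.le hq1.le (by omega)
        have h2 : q^(2*((i.val+1)/2)) ≤ 1 := pow_le_one₀ hq.le hq1.le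
        constructor
        · nlinarith [hNR]
        · nlinarith [hNR]
    · rw [← Real.sqrt_div hNR.le, hinvq,
        show (N:ℝ)/((N:ℝ)/2*q^(2*M)) = (Real.sqrt 2 * (q⁻¹)^M)^2 by
          rw [mul_pow, Real.sq_sqrt (by norm_num : (0:ℝ) ≤ 2), ← pow_mul]
          rw [inv_pow]
          field_simp
          ring,
        Real.sqrt_sq (by positivity)]
  · -- case 2
    intro h1 h2
    have hq1 : 1 ≤ q := (one_le_div hρ).mpr h1
    have ht1 : (1:ℝ) ≤ (2:ℝ)^((1:ℝ)/(2*M)) := Real.one_le_rpow (by norm_num) (by positivity)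
    have htpow : ((2:ℝ)^((1:ℝ)/(2*M)))^(2*M : ℕ) = 2 := by
      rw [← Real.rpow_natCast ((2:ℝ)^((1:ℝ)/(2*M))) (2*M), ← Real.rpow_mul (by norm_num)]
      rw [show (1:ℝ)/(2*(M:ℝ)) * ((2*M : ℕ):ℝ) = 1 by
        push_cast
        field_simp]
      exact Real.rpow_one 2
    have hqlt : q < (2:ℝ)^((1:ℝ)/(2*M)) := by
      rw [hqdef]
      exact (div_lt_iff₀ hρ).mpr h2
    have hq2M : q^(2*M) < 2 := by
      calc q^(2*M) < ((2:ℝ)^((1:ℝ)/(2*M)))^(2*M : ℕ) :=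
            pow_lt_pow_left₀ hqlt hq.le (by omega)
      _ = 2 := htpow
    refine (key (N:ℝ) ((N:ℝ)/2 * q^2) ?_ ⟨_, hd0⟩ ⟨_, hd1⟩).trans ?_
    · intro i
      by_cases hi : i.val = 0
      · rw [hdz i hi]
        have h1 : q^2 ≤ q^(2*M) := pow_le_pow_right₀ hq1 (by omega)
        constructor
        · nlinarith [hNR]
        · exact le_refl _
      · obtain ⟨hk1, hk2⟩ := kfact i hi
        rw [hdform i hi]
        have h1 : q^2 ≤ q^(2*((i.val+1)/2)) := pow_le_pow_right₀ hq1 (by omega)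
        have h2' : q^(2*((i.val+1)/2)) ≤ q^(2*M) := pow_le_pow_right₀ hq1 (by omega)
        constructor
        · nlinarith [hNR]
        · nlinarith [hNR]
    · rw [← Real.sqrt_div hNR.le, hinvq,
        show (N:ℝ)/((N:ℝ)/2*q^2) = (Real.sqrt 2 * q⁻¹)^2 by
          rw [mul_pow, Real.sq_sqrt (by norm_num : (0:ℝ) ≤ 2)]
          field_simp,
        Real.sqrt_sq (by positivity)]
  · -- case 3
    intro h1 h2
    have ht1 : (1:ℝ) ≤ (2:ℝ)^((1:ℝ)/(2*M)) := Real.one_le_rpow (by norm_num) (by positivity)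
    have htpow : ((2:ℝ)^((1:ℝ)/(2*M)))^(2*M : ℕ) = 2 := by
      rw [← Real.rpow_natCast ((2:ℝ)^((1:ℝ)/(2*M))) (2*M), ← Real.rpow_mul (by norm_num)]
      rw [show (1:ℝ)/(2*(M:ℝ)) * ((2*M : ℕ):ℝ) = 1 by
        push_cast
        field_simp]
      exact Real.rpow_one 2
    have hqge : (2:ℝ)^((1:ℝ)/(2*M)) ≤ q := by
      rw [hqdef]
      exact (le_div_iff₀ hρ).mpr h1
    have hq1 : 1 ≤ q := le_trans ht1 hqge
    have hq2M : 2 ≤ q^(2*M) := by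
      calc (2:ℝ) = ((2:ℝ)^((1:ℝ)/(2*M)))^(2*M : ℕ) := htpow.symm
      _ ≤ q^(2*M) := pow_le_pow_left₀ (by positivity) hqge _
    have hqs : q < Real.sqrt 2 := by
      rw [hqdef]
      exact (div_lt_iff₀ hρ).mpr h2
    have hq2 : q^2 < 2 := by
      nlinarith [Real.sq_sqrt (by norm_num : (0:ℝ) ≤ 2), Real.sqrt_nonneg 2]
    refine (key ((N:ℝ)/2 * q^(2*M)) ((N:ℝ)/2 * q^2) ?_ ⟨_, hdM⟩ ⟨_, hd1⟩).trans ?_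
    · intro i
      by_cases hi : i.val = 0
      · rw [hdz i hi]
        constructor
        · nlinarith [hNR]
        · nlinarith [hNR]
      · obtain ⟨hk1, hk2⟩ := kfact i hi
        rw [hdform i hi]
        have h1' : q^2 ≤ q^(2*((i.val+1)/2)) := pow_le_pow_right₀ hq1 (by omega)
        have h2' : q^(2*((i.val+1)/2)) ≤ q^(2*M) := pow_le_pow_right₀ hq1 (by omega)
        constructor
        · nlinarith [hNR]
        · nlinarith [hNR]
    · rw [← Real.sqrt_div (by positivity),
        show ((N:ℝ)/2*q^(2*M))/((N:ℝ)/2*q^2) = (q^(M-1))^2 by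
          rw [← pow_mul, show (M-1)*2 = 2*M - 2 by omega]
          rw [show 2*M = (2*M-2) + 2 by omega, pow_add]
          field_simp
          ring_nf; congr 1; omega,
        Real.sqrt_sq (by positivity)]
  · -- case 4
    intro h1
    have hqs : Real.sqrt 2 ≤ q := by
      rw [hqdef]
      exact (le_div_iff₀ hρ).mpr h1
    have hq2 : 2 ≤ q^2 := by
      nlinarith [Real.sq_sqrt (by norm_num : (0:ℝ) ≤ 2), Real.sqrt_nonneg 2]
    have hq1 : 1 ≤ q := by nlinarith
    refine (key ((N:ℝ)/2 * q^(2*M)) (N:ℝ) ?_ ⟨_, hdM⟩ ⟨_, hd0⟩).trans ?_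
    · intro i
      by_cases hi : i.val = 0
      · rw [hdz i hi]
        have h1' : 2 ≤ q^(2*M) := le_trans hq2 (pow_le_pow_right₀ hq1 (by omega))
        constructor
        · exact le_refl _
        · nlinarith [hNR]
      · obtain ⟨hk1, hk2⟩ := kfact i hi
        rw [hdform i hi]
        have h1' : 2 ≤ q^(2*((i.val+1)/2)) :=
          le_trans hq2 (pow_le_pow_right₀ hq1 (by omega))
        have h2' : q^(2*((i.val+1)/2)) ≤ q^(2*M) := pow_le_pow_right₀ hq1 (by omega)
        constructor
        · nlinarith [hNR]
        · nlinarith [hNR]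
    · rw [← Real.sqrt_div (by positivity),
        show ((N:ℝ)/2*q^(2*M))/(N:ℝ) = ((1/Real.sqrt 2)*q^M)^2 by
          have hh : ((1/Real.sqrt 2)*q^M)^2 = (1/2) * q^(2*M) := by
            rw [mul_pow, ← pow_mul, show M*2 = 2*M by ring]
            congr 1
            rw [div_pow, one_pow, Real.sq_sqrt (by norm_num : (0:ℝ) ≤ 2)]
          rw [hh]
          field_simp,
        Real.sqrt_sq (by positivity)]
end
end
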